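/- Let α, λ, β > 0 and f_V the half-normal density. Then as x → -∞, ∫₀^∞ (1/π) e^{-(1+β²)((x-αv)λ/α)²/2} (2/(β(1+β²)) + 1/(β³(1+β²))) ((x-αv)λ/α)^{-4} f_V(v) dv = O(|x|^{-5} e^{-(λ²/(2α²))(1+β²)x²}). -/

import Mathlib

open Real MeasureTheory Filter Set Asymptotics

noncomputable def halfNormalPdf (v : ℝ) : ℝ :=
  if 0 < v then Real.sqrt (2 / π) * Real.exp (-v ^ 2 / 2) else 0

set_option maxHeartbeats 1600000 in
/-- The higher-order correction term of the joint tail integral is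
O(|x|⁻⁵ e^{-(λ²/(2α²))(1+β²)x²}) as x → -∞. -/
theorem joint_tail_correction_term (α l β : ℝ) (hα : 0 < α) (hl : 0 < l) (hβ : 0 < β) :
    (fun x : ℝ =>
      ∫ v in Set.Ioi (0 : ℝ),
        (1 / π) * Real.exp (-(1 + β ^ 2) * ((x - α * v) * l / α) ^ 2 / 2) *
          (2 / (β * (1 + β ^ 2)) + 1 / (β ^ 3 * (1 + β ^ 2))) *
          ((x - α * v) * l / α) ^ (-4 : ℤ) * halfNormalPdf v)
      =O[atBot] (fun x : ℝ =>
        |x| ^ (-5 : ℤ) * Real.exp (-(l ^ 2 / (2 * α ^ 2)) * (1 + β ^ 2) * x ^ 2)) := by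
  have hπ : (0:ℝ) < π := Real.pi_pos
  have hβ2 : (0:ℝ) < 1 + β ^ 2 := by positivity
  set K : ℝ := 2 / (β * (1 + β ^ 2)) + 1 / (β ^ 3 * (1 + β ^ 2)) with hKdef
  have hK : 0 < K := by positivity
  set b : ℝ := (1 + β ^ 2) * l ^ 2 / α with hbdef
  have hb : 0 < b := by positivity
  set C : ℝ := (1 / π) * K * (α / l) ^ 4 * Real.sqrt (2 / π) with hCdef
  have hC : 0 < C := by positivity
  rw [isBigO_iff]
  refine ⟨C / b, ?_⟩
  filter_upwards [eventually_le_atBot (-1 : ℝ)] with x hx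
  have hx0 : x < 0 := lt_of_le_of_lt hx (by norm_num)
  have hxabs : |x| = -x := abs_of_neg hx0
  have hxpos : (0:ℝ) < -x := by linarith
  have hxa : (0:ℝ) < |x| := by rw [hxabs]; exact hxpos
  set a : ℝ := b * |x| with hadef
  have ha : 0 < a := mul_pos hb hxa
  set c : ℝ := l ^ 2 / (2 * α ^ 2) * (1 + β ^ 2) with hcdef
  -- pointwise bound
  have hbound : ∀ v ∈ Set.Ioi (0:ℝ),
      ‖(1 / π) * Real.exp (-(1 + β ^ 2) * ((x - α * v) * l / α) ^ 2 / 2) * K *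
        ((x - α * v) * l / α) ^ (-4 : ℤ) * halfNormalPdf v‖
      ≤ C * (|x| ^ 4)⁻¹ * Real.exp (-c * x ^ 2) * Real.exp (-(a * v)) := by
    intro v hv
    have hv0 : 0 < v := hv
    have hfv : halfNormalPdf v = Real.sqrt (2 / π) * Real.exp (-v ^ 2 / 2) := if_pos hv0
    have hfv0 : 0 ≤ halfNormalPdf v := by rw [hfv]; positivity
    have hfvle : halfNormalPdf v ≤ Real.sqrt (2 / π) := by
      rw [hfv]
      nlinarith [Real.sqrt_nonneg (2 / π), Real.exp_le_one_iff.mpr (by nlinarith : -v^2/2 ≤ 0)]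
    have hP0 : (0:ℝ) ≤ ((x - α * v) * l / α) ^ (-4 : ℤ) := by
      rw [zpow_neg]
      positivity
    -- exponential bound
    have hE : Real.exp (-(1 + β ^ 2) * ((x - α * v) * l / α) ^ 2 / 2)
        ≤ Real.exp (-c * x ^ 2) * Real.exp (-(a * v)) := by
      rw [← Real.exp_add]
      apply Real.exp_le_exp.2
      rw [hcdef, hadef, hxabs, hbdef]
      have h1 : (x - α * v) ^ 2 ≥ x ^ 2 + 2 * α * v * (-x) := by nlinarith
      rw [div_pow, mul_pow]
      have hd : (0:ℝ) < (1 + β ^ 2) * l ^ 2 / α ^ 2 := by positivity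
      have e1 : -(1 + β ^ 2) * ((x - α * v) ^ 2 * l ^ 2 / α ^ 2) / 2
          = -(((1 + β ^ 2) * l ^ 2 / α ^ 2) * (x - α * v) ^ 2) / 2 := by ring
      have e2 : -(l ^ 2 / (2 * α ^ 2) * (1 + β ^ 2)) * x ^ 2 +
            -((1 + β ^ 2) * l ^ 2 / α * -x * v)
          = -(((1 + β ^ 2) * l ^ 2 / α ^ 2) * (x ^ 2 + 2 * α * v * (-x))) / 2 := by
        field_simp
        ring
      rw [e1, e2]
      have := mul_le_mul_of_nonneg_left h1 hd.le
      linarith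
    -- power bound
    have hP : ((x - α * v) * l / α) ^ (-4 : ℤ) ≤ (α / l) ^ 4 * (|x| ^ 4)⁻¹ := by
      rw [zpow_neg]
      norm_cast
      have h4 : ((x - α * v) * l / α) ^ 4 = (x - α * v) ^ 4 * (l / α) ^ 4 := by ring
      have hineq : |x| ^ 4 * (l / α) ^ 4 ≤ ((x - α * v) * l / α) ^ 4 := by
        rw [h4]
        have h5 : |x| ≤ α * v - x := by rw [hxabs]; nlinarith
        have h6 : |x| ^ 4 ≤ (α * v - x) ^ 4 :=
          pow_le_pow_left₀ (abs_nonneg x) h5 4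
        have h7 : (x - α * v) ^ 4 = (α * v - x) ^ 4 := by ring
        have : (0:ℝ) < (l/α)^4 := by positivity
        nlinarith
      have hpos : (0:ℝ) < |x| ^ 4 * (l / α) ^ 4 := by positivity
      calc (((x - α * v) * l / α) ^ 4)⁻¹ ≤ (|x| ^ 4 * (l / α) ^ 4)⁻¹ :=
            inv_anti₀ hpos hineq
        _ = (α / l) ^ 4 * (|x| ^ 4)⁻¹ := by
            rw [mul_inv]
            have : ((l / α) ^ 4)⁻¹ = (α / l) ^ 4 := by
              rw [← inv_pow, inv_div]
            rw [this]; ring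
    have hnn : (0:ℝ) ≤ (1 / π) * Real.exp (-(1 + β ^ 2) * ((x - α * v) * l / α) ^ 2 / 2) * K *
        ((x - α * v) * l / α) ^ (-4 : ℤ) * halfNormalPdf v := by positivity
    rw [Real.norm_eq_abs, abs_of_nonneg hnn]
    calc (1 / π) * Real.exp (-(1 + β ^ 2) * ((x - α * v) * l / α) ^ 2 / 2) * K *
          ((x - α * v) * l / α) ^ (-4 : ℤ) * halfNormalPdf v
        ≤ (1 / π) * (Real.exp (-c * x ^ 2) * Real.exp (-(a * v))) * K *
          ((α / l) ^ 4 * (|x| ^ 4)⁻¹) * Real.sqrt (2 / π) := by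
          gcongr <;> positivity
      _ = C * (|x| ^ 4)⁻¹ * Real.exp (-c * x ^ 2) * Real.exp (-(a * v)) := by
          rw [hCdef]; ring
  -- integrability of the bound
  have hint : IntegrableOn (fun v => C * (|x| ^ 4)⁻¹ * Real.exp (-c * x ^ 2) * Real.exp (-(a * v)))
      (Set.Ioi (0:ℝ)) := by
    have h0 : IntegrableOn (fun v : ℝ => Real.exp (-(a * v))) (Set.Ioi 0) := by
      have h1 := exp_neg_integrableOn_Ioi 0 ha
      simp only [neg_mul] at h1
      exact h1
    exact h0.const_mul _
  have hle := MeasureTheory.norm_integral_le_of_norm_le hint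
      ((ae_restrict_iff' measurableSet_Ioi).2 (Filter.Eventually.of_forall hbound))
  -- compute the integral of the bound
  have hcomp : ∫ v in Set.Ioi (0:ℝ), C * (|x| ^ 4)⁻¹ * Real.exp (-c * x ^ 2) * Real.exp (-(a * v))
      = C * (|x| ^ 4)⁻¹ * Real.exp (-c * x ^ 2) * a⁻¹ := by
    rw [MeasureTheory.integral_const_mul]
    congr 1
    have : ∫ v in Set.Ioi (0:ℝ), Real.exp (-(a * v))
        = a⁻¹ • ∫ v in Set.Ioi (a * 0), Real.exp (-v) := by
      exact MeasureTheory.integral_comp_mul_left_Ioi (fun t => Real.exp (-t)) 0 ha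
    rw [this]
    simp [integral_exp_neg_Ioi, integral_exp_Iic_zero]
  rw [hcomp] at hle
  have hrhs : ‖|x| ^ (-5 : ℤ) * Real.exp (-(l ^ 2 / (2 * α ^ 2)) * (1 + β ^ 2) * x ^ 2)‖
      = (|x| ^ 5)⁻¹ * Real.exp (-c * x ^ 2) := by
    rw [Real.norm_eq_abs, abs_of_nonneg (by positivity), zpow_neg, hcdef]
    norm_cast
    ring
  rw [hrhs]
  refine hle.trans (le_of_eq ?_)
  rw [hadef, mul_inv, show |x| ^ 5 = |x| ^ 4 * |x| from by ring, mul_inv,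
    div_eq_mul_inv]
  ring
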